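/- arXiv:2605.22466 — 2 statements merged into one kernel-verified Lean document; each statement's English description precedes it below -/
import Mathlib

section
/- For n ≥ 3 and 2 ≤ k ≤ n, the resultant Res(g_k, h_n) is (up to sign) a power of 2, where g_n, h_n are the numerator and denominator of the n-th iterate of f(x) = 2/(x−1)². -/
open Polynomial

/-- `(g_n, h_n)` with `f^n = g_n / h_n` for `f(x) = 2/(x-1)²`, indexed so that
`ghPair k n = (g_{n+1}, h_{n+1})`. -/
noncomputable def ghPair (k : Type*) [Field k] : ℕ → k[X] × k[X]
  | 0 => (C 2, (X - C 1) ^ 2)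
  | n + 1 => (2 * (ghPair k n).2 ^ 2, ((ghPair k n).1 - (ghPair k n).2) ^ 2)

/-- The numerator `g_n` of `f^n` (for `n ≥ 1`). -/
noncomputable def gPol (k : Type*) [Field k] (n : ℕ) : k[X] := (ghPair k (n - 1)).1

/-- The denominator `h_n` of `f^n` (for `n ≥ 1`). -/
noncomputable def hPol (k : Type*) [Field k] (n : ℕ) : k[X] := (ghPair k (n - 1)).2

/-- The resultant of two rational polynomials, computed over `ℂ` by the formula
`Res(p, q) = lc(p)^(deg q) · ∏_{p(α)=0} q(α)` (roots counted with multiplicity). -/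
noncomputable def resQ (p q : ℚ[X]) : ℂ :=
  (p.map (algebraMap ℚ ℂ)).leadingCoeff ^ q.natDegree *
    (((p.map (algebraMap ℚ ℂ)).roots.map fun α => (q.map (algebraMap ℚ ℂ)).eval α).prod)

/-! Auxiliary development -/

noncomputable def GG (i : ℕ) : ℂ[X] := (ghPair ℂ i).1
noncomputable def HH (i : ℕ) : ℂ[X] := (ghPair ℂ i).2
noncomputable def DD (i : ℕ) : ℂ[X] := GG i - HH i

lemma C2 : (C 2 : ℂ[X]) = 2 := map_ofNat C 2

lemma GG_zero : GG 0 = C 2 := rfl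
lemma HH_zero : HH 0 = (X - C 1) ^ 2 := rfl
lemma GG_succ (i : ℕ) : GG (i + 1) = 2 * HH i ^ 2 := rfl
lemma GG_succ' (i : ℕ) : GG (i + 1) = C 2 * HH i ^ 2 := by rw [GG_succ, C2]
lemma HH_succ (i : ℕ) : HH (i + 1) = DD i ^ 2 := rfl

/-- the set of signed powers of two -/
def SP (z : ℂ) : Prop := ∃ m : ℕ, z = 2 ^ m ∨ z = -(2 ^ m)

lemma SP_mul {a b : ℂ} (ha : SP a) (hb : SP b) : SP (a * b) := by
  obtain ⟨m, hm⟩ := ha; obtain ⟨l, hl⟩ := hb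
  refine ⟨m + l, ?_⟩
  rcases hm with h | h <;> rcases hl with h' | h' <;> rw [h, h', pow_add] <;>
    [left; right; right; left] <;> ring

lemma SP_two_pow (m : ℕ) : SP ((2 : ℂ) ^ m) := ⟨m, Or.inl rfl⟩

lemma SP_one : SP (1 : ℂ) := ⟨0, Or.inl (by simp)⟩

lemma SP_neg_one : SP (-1 : ℂ) := ⟨0, Or.inr (by simp)⟩

lemma SP_pow {a : ℂ} (ha : SP a) (m : ℕ) : SP (a ^ m) := by
  induction m with
  | zero => simpa using SP_one
  | succ l ih => rw [pow_succ]; exact SP_mul ih ha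

lemma SP_neg_one_pow (m : ℕ) : SP ((-1 : ℂ) ^ m) := SP_pow SP_neg_one m

/-- product of `q` over the roots of `p` -/
noncomputable def Pr (p q : ℂ[X]) : ℂ := (p.roots.map fun α => q.eval α).prod

lemma Pr_mul (p q r : ℂ[X]) : Pr p (q * r) = Pr p q * Pr p r := by
  simp [Pr, Multiset.prod_map_mul]

lemma Pr_pow (p q : ℂ[X]) (m : ℕ) : Pr p (q ^ m) = Pr p q ^ m := by
  induction m with
  | zero => simp [Pr]
  | succ l ih => rw [pow_succ, Pr_mul, ih, pow_succ]

lemma Pr_C (p : ℂ[X]) (c : ℂ) : Pr p (C c) = c ^ p.roots.card := by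
  simp [Pr, Multiset.map_const', Multiset.prod_replicate]

lemma Pr_congr {p q r : ℂ[X]} (h : p ∣ q - r) : Pr p q = Pr p r := by
  obtain ⟨s, hs⟩ := h
  unfold Pr
  congr 1
  refine Multiset.map_congr rfl fun α hα => ?_
  have hroot : p.eval α = 0 := (Polynomial.mem_roots'.mp hα).2
  have : q.eval α - r.eval α = p.eval α * s.eval α := by
    rw [← eval_mul, ← hs, eval_sub]
  rw [hroot, zero_mul, sub_eq_zero] at this
  exact this

lemma Pr_sq_left (p q : ℂ[X]) : Pr (p ^ 2) q = Pr p q ^ 2 := by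
  unfold Pr
  rw [Polynomial.roots_pow, two_nsmul, Multiset.map_add, Multiset.prod_add, sq]

lemma Pr_C_mul_left (p q : ℂ[X]) {c : ℂ} (hc : c ≠ 0) : Pr (C c * p) q = Pr p q := by
  unfold Pr
  rw [Polynomial.roots_C_mul _ hc]

lemma ms_prod_comm (s t : Multiset ℂ) (f : ℂ → ℂ → ℂ) :
    (s.map fun a => (t.map fun b => f a b).prod).prod
      = (t.map fun b => (s.map fun a => f a b).prod).prod := by
  induction s using Multiset.induction_on with
  | empty => simp
  | cons a s ih => simp [Multiset.prod_map_mul, ih]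

lemma ms_prod_neg (t : Multiset ℂ) (g : ℂ → ℂ) :
    (t.map fun b => -g b).prod = (-1) ^ t.card * (t.map fun b => g b).prod := by
  induction t using Multiset.induction_on with
  | empty => simp
  | cons a t ih => simp only [Multiset.map_cons, Multiset.prod_cons, ih,
      Multiset.card_cons, pow_succ]; ring

lemma Pr_expand (p q : ℂ[X]) :
    Pr p q = q.leadingCoeff ^ p.roots.card *
      (p.roots.map fun a => (q.roots.map fun b => a - b).prod).prod := by
  conv_lhs => rw [Pr]
  have hq : q = C q.leadingCoeff * (q.roots.map fun b => X - C b).prod :=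
    (C_leadingCoeff_mul_prod_multiset_X_sub_C (splits_iff_card_roots.mp (IsAlgClosed.splits q))).symm
  have heval : ∀ a : ℂ, q.eval a = q.leadingCoeff * (q.roots.map fun b => a - b).prod := by
    intro a
    conv_lhs => rw [hq]
    rw [eval_mul, eval_C, eval_multiset_prod, Multiset.map_map]
    simp
  calc (p.roots.map fun a => q.eval a).prod
      = (p.roots.map fun a =>
          q.leadingCoeff * (q.roots.map fun b => a - b).prod).prod := by
        congr 1; exact Multiset.map_congr rfl fun a _ => heval a
    _ = _ := by
        rw [Multiset.prod_map_mul]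
        congr 1
        simp [Multiset.map_const', Multiset.prod_replicate]

/-- resultant symmetry for monic `p` -/
lemma Pr_swap (p q : ℂ[X]) (hp : p.Monic) :
    Pr p q = (-1) ^ (p.roots.card * q.roots.card) * q.leadingCoeff ^ p.roots.card * Pr q p := by
  rw [Pr_expand p q, Pr_expand q p, hp.leadingCoeff, one_pow, one_mul]
  rw [ms_prod_comm q.roots p.roots (fun b a => b - a)]
  have step : ∀ a : ℂ, (q.roots.map fun b => a - b).prod
      = (-1) ^ q.roots.card * (q.roots.map fun b => b - a).prod := by
    intro a
    have := ms_prod_neg q.roots (fun b => b - a)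
    simpa [neg_sub] using this
  have key : (p.roots.map fun a => (q.roots.map fun b => a - b).prod).prod
      = (-1) ^ (p.roots.card * q.roots.card) *
        (p.roots.map fun a => (q.roots.map fun b => b - a).prod).prod := by
    calc (p.roots.map fun a => (q.roots.map fun b => a - b).prod).prod
        = (p.roots.map fun a =>
            (-1) ^ q.roots.card * (q.roots.map fun b => b - a).prod).prod := by
          congr 1; exact Multiset.map_congr rfl fun a _ => step a
      _ = _ := by
          rw [Multiset.prod_map_mul]
          congr 1
          rw [Multiset.map_const', Multiset.prod_replicate, ← pow_mul, mul_comm]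
  rw [key]; ring

/-! Degree and leading coefficient bookkeeping -/

lemma DD_zero_eq : DD 0 = C (-1) * X ^ 2 + C 2 * X + C 1 := by
  show C 2 - (X - C 1) ^ 2 = _
  have h1 : (C 1 : ℂ[X]) = 1 := by simp
  have h3 : (C (-1) : ℂ[X]) = -1 := by simp
  rw [h1, C2, h3]; ring

lemma key : ∀ i : ℕ, (HH i).Monic ∧ (HH i).natDegree = 2 ^ (i + 1) ∧
    (DD i).natDegree = 2 ^ (i + 1) ∧
    ((DD i).leadingCoeff = 1 ∨ (i = 0 ∧ (DD i).leadingCoeff = -1)) := by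
  intro i
  induction i with
  | zero =>
    refine ⟨(monic_X_sub_C 1).pow 2, ?_, ?_, Or.inr ⟨rfl, ?_⟩⟩
    · rw [HH_zero, natDegree_pow, natDegree_X_sub_C]; norm_num
    · rw [DD_zero_eq]; exact natDegree_quadratic (by norm_num)
    · rw [DD_zero_eq]; exact leadingCoeff_quadratic (by norm_num)
  | succ i ih =>
    obtain ⟨hm, hdH, hdD, hlD⟩ := ih
    have hlD' : (DD i).leadingCoeff = 1 ∨ (DD i).leadingCoeff = -1 := by
      rcases hlD with h | h
      exacts [Or.inl h, Or.inr h.2]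
    have hlD2 : (DD i ^ 2).leadingCoeff = 1 := by
      rw [leadingCoeff_pow]
      rcases hlD' with h | h <;> rw [h] <;> norm_num
    have hDne : DD i ≠ 0 := fun h => by
      rcases hlD' with h' | h' <;> rw [h, leadingCoeff_zero] at h' <;> simp at h'
    have hHne : HH i ≠ 0 := hm.ne_zero
    have hmH1 : (HH (i + 1)).Monic := by
      show (HH (i + 1)).leadingCoeff = 1
      rw [HH_succ]; exact hlD2
    have hdH1 : (HH (i + 1)).natDegree = 2 ^ (i + 2) := by
      rw [HH_succ, natDegree_pow, hdD]; ring
    have hP : (C 2 * HH i ^ 2).natDegree = 2 ^ (i + 2) := by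
      rw [natDegree_C_mul (by norm_num : (2:ℂ) ≠ 0), natDegree_pow, hdH]; ring
    have hQ : (DD i ^ 2).natDegree = 2 ^ (i + 2) := by
      rw [natDegree_pow, hdD]; ring
    have hPne : C 2 * HH i ^ 2 ≠ 0 :=
      mul_ne_zero (by norm_num) (pow_ne_zero _ hHne)
    have hQne : DD i ^ 2 ≠ 0 := pow_ne_zero _ hDne
    have hdeg : (C 2 * HH i ^ 2).degree = (DD i ^ 2).degree := by
      rw [degree_eq_natDegree hPne, degree_eq_natDegree hQne, hP, hQ]
    have hlP : (C 2 * HH i ^ 2).leadingCoeff = 2 := by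
      rw [leadingCoeff_mul, leadingCoeff_C, leadingCoeff_pow, hm.leadingCoeff]; norm_num
    have hDD1 : DD (i + 1) = C 2 * HH i ^ 2 - DD i ^ 2 := by
      rw [DD, GG_succ', HH_succ]
    have hsub : (C 2 * HH i ^ 2 - DD i ^ 2).leadingCoeff = 1 := by
      rw [leadingCoeff_sub_of_degree_eq hdeg (by rw [hlP, hlD2]; norm_num), hlP, hlD2]
      norm_num
    refine ⟨hmH1, hdH1, ?_, Or.inl (by rw [hDD1]; exact hsub)⟩
    have hdegsub : (C 2 * HH i ^ 2 - DD i ^ 2).degree = (C 2 * HH i ^ 2).degree := by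
      refine le_antisymm (le_trans (degree_sub_le _ _) ?_) ?_
      · rw [hdeg, max_self]
      · have hc : (C 2 * HH i ^ 2 - DD i ^ 2).coeff (2 ^ (i + 2)) ≠ 0 := by
          have e1 : (C 2 * HH i ^ 2).coeff (2 ^ (i + 2)) = 2 := by
            rw [← hP, coeff_natDegree, hlP]
          have e2 : (DD i ^ 2).coeff (2 ^ (i + 2)) = 1 := by
            rw [← hQ, coeff_natDegree, hlD2]
          rw [coeff_sub, e1, e2]; norm_num
        calc (C 2 * HH i ^ 2).degree = ((2 ^ (i + 2) : ℕ) : WithBot ℕ) := by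
              rw [degree_eq_natDegree hPne, hP]
          _ ≤ _ := le_degree_of_ne_zero hc
    rw [hDD1, natDegree_eq_of_degree_eq_some, ← hP]
    rw [hdegsub, degree_eq_natDegree hPne]

lemma HH_monic (i : ℕ) : (HH i).Monic := (key i).1
lemma DD_lc (i : ℕ) : (DD i).leadingCoeff = 1 ∨ (DD i).leadingCoeff = -1 := by
  rcases (key i).2.2.2 with h | h
  exacts [Or.inl h, Or.inr h.2]
lemma DD_monic (i : ℕ) (hi : 1 ≤ i) : (DD i).Monic := by
  show (DD i).leadingCoeff = 1
  rcases (key i).2.2.2 with h | h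
  · exact h
  · omega

/-! Congruences -/

lemma cong_H_one (j : ℕ) : HH j ∣ HH (j + 1) - GG j ^ 2 := by
  have h : HH (j + 1) - GG j ^ 2 = HH j * (HH j - 2 * GG j) := by
    rw [HH_succ]; simp only [DD]; ring
  rw [h]; exact dvd_mul_right _ _

lemma cong_pair : ∀ (j m : ℕ), 2 ≤ m →
    (HH j ∣ HH (j + m) - GG j ^ 2 ^ m) ∧ (HH j ∣ GG (j + m) - 2 * GG j ^ 2 ^ m) := by
  intro j m hm
  obtain ⟨l, rfl⟩ := Nat.exists_eq_add_of_le hm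
  induction l with
  | zero =>
    obtain ⟨s, hs⟩ := cong_H_one j
    have h1 : HH (j + 1) = GG j ^ 2 + HH j * s := by rw [← hs]; ring
    constructor
    · have h : HH (j + 2) - GG j ^ 2 ^ 2 =
          HH j * ((2 * HH j - s) * (2 * HH j ^ 2 - HH j * s - 2 * GG j ^ 2)) := by
        rw [show j + 2 = (j + 1) + 1 from rfl, HH_succ]
        simp only [DD]
        rw [GG_succ, h1]
        ring
      rw [show j + (2 + 0) = j + 2 from rfl, h]; exact dvd_mul_right _ _
    · have h : GG (j + 2) - 2 * GG j ^ 2 ^ 2 =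
          HH j * (2 * s * (2 * GG j ^ 2 + HH j * s)) := by
        rw [show j + 2 = (j + 1) + 1 from rfl, GG_succ, h1]
        ring
      rw [show j + (2 + 0) = j + 2 from rfl, h]; exact dvd_mul_right _ _
  | succ l ih =>
    obtain ⟨⟨s, hs⟩, ⟨t, ht⟩⟩ := ih (by omega)
    set m := 2 + l with hm'
    have hH : HH (j + m) = GG j ^ 2 ^ m + HH j * s := by rw [← hs]; ring
    have hG : GG (j + m) = 2 * GG j ^ 2 ^ m + HH j * t := by rw [← ht]; ring
    have hpow : (GG j ^ 2 ^ m) ^ 2 = GG j ^ 2 ^ (m + 1) := by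
      rw [← pow_mul, ← pow_succ]
    have hidx : j + (2 + (l + 1)) = (j + m) + 1 := by omega
    have hexp : 2 + (l + 1) = m + 1 := by omega
    rw [hidx, hexp]
    constructor
    · have h : HH ((j + m) + 1) - GG j ^ 2 ^ (m + 1) =
          HH j * ((t - s) * (HH j * (t - s) + 2 * (GG j ^ 2 ^ m))) := by
        rw [HH_succ]
        simp only [DD]
        rw [hH, hG, ← hpow]
        ring
      rw [h]; exact dvd_mul_right _ _
    · have h : GG ((j + m) + 1) - 2 * GG j ^ 2 ^ (m + 1) =
          HH j * (2 * s * (2 * GG j ^ 2 ^ m + HH j * s)) := by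
        rw [GG_succ, hH, ← hpow]
        ring
      rw [h]; exact dvd_mul_right _ _

lemma cong_H (j m : ℕ) (hm : 1 ≤ m) : HH j ∣ HH (j + m) - GG j ^ 2 ^ m := by
  rcases eq_or_lt_of_le hm with h | h
  · rw [← h]; simpa using cong_H_one j
  · exact (cong_pair j m h).1

/-! The SP chain -/

lemma SP_D : ∀ j, SP (Pr (DD j) (GG j)) := by
  intro j
  induction j with
  | zero =>
    rw [GG_zero, Pr_C]
    exact SP_two_pow _
  | succ j ih =>
    have h1 : DD (j + 1) ∣ GG (j + 1) - DD j ^ 2 := by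
      have h : GG (j + 1) - DD j ^ 2 = DD (j + 1) := by
        show GG (j + 1) - DD j ^ 2 = GG (j + 1) - HH (j + 1)
        rw [HH_succ]
      rw [h]
    have e1 : Pr (DD (j + 1)) (GG (j + 1)) = Pr (DD (j + 1)) (DD j) ^ 2 := by
      rw [Pr_congr h1, Pr_pow]
    have e2 : Pr (DD (j + 1)) (DD j) =
        (-1) ^ ((DD (j+1)).roots.card * (DD j).roots.card) *
          (DD j).leadingCoeff ^ (DD (j+1)).roots.card * Pr (DD j) (DD (j + 1)) :=
      Pr_swap _ _ (DD_monic (j + 1) (by omega))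
    have h2 : DD j ∣ DD (j + 1) - C 2 * GG j ^ 2 := by
      have h : DD (j + 1) - C 2 * GG j ^ 2 = DD j * (DD j - 4 * GG j) := by
        rw [C2]
        show GG (j + 1) - HH (j + 1) - 2 * GG j ^ 2 = _
        rw [GG_succ, HH_succ]
        simp only [DD]
        ring
      rw [h]; exact dvd_mul_right _ _
    have e3 : Pr (DD j) (DD (j + 1)) = 2 ^ (DD j).roots.card * Pr (DD j) (GG j) ^ 2 := by
      rw [Pr_congr h2, Pr_mul, Pr_C, Pr_pow]
    rw [e1, e2, e3]
    apply SP_pow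
    refine SP_mul (SP_mul (SP_neg_one_pow _) ?_) (SP_mul (SP_two_pow _) (SP_pow ih 2))
    rcases DD_lc j with h | h <;> rw [h]
    · exact SP_pow SP_one _
    · exact SP_pow SP_neg_one _

lemma SP_C (j : ℕ) : SP (Pr (HH (j + 1)) (HH j)) := by
  rw [HH_succ, Pr_sq_left]
  have h : Pr (DD j) (HH j) = Pr (DD j) (GG j) := by
    apply Pr_congr
    have h' : HH j - GG j = DD j * (-1) := by simp only [DD]; ring
    rw [h']; exact dvd_mul_right _ _
  rw [h]
  exact SP_pow (SP_D j) 2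

lemma SP_B : ∀ j, SP (Pr (HH j) (GG j)) := by
  intro j
  cases j with
  | zero => rw [GG_zero, Pr_C]; exact SP_two_pow _
  | succ j =>
    rw [GG_succ', Pr_mul, Pr_C, Pr_pow]
    exact SP_mul (SP_two_pow _) (SP_pow (SP_C j) 2)

lemma SP_A (j m : ℕ) (hm : 1 ≤ m) : SP (Pr (HH j) (HH (j + m))) := by
  have h := cong_H j m hm
  rw [Pr_congr h, Pr_pow]
  exact SP_pow (SP_B j) _

/-! Transfer from ℚ to ℂ -/

lemma map_ghPair (i : ℕ) :
    ((ghPair ℚ i).1.map (algebraMap ℚ ℂ) = GG i) ∧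
      ((ghPair ℚ i).2.map (algebraMap ℚ ℂ) = HH i) := by
  induction i with
  | zero =>
    constructor
    · show (C 2 : ℚ[X]).map _ = (C 2 : ℂ[X]); simp
    · show ((X - C 1 : ℚ[X]) ^ 2).map _ = ((X - C 1 : ℂ[X]) ^ 2); simp
  | succ i ih =>
    obtain ⟨h1, h2⟩ := ih
    constructor
    · show ((2 : ℚ[X]) * (ghPair ℚ i).2 ^ 2).map _ = GG (i + 1)
      rw [Polynomial.map_mul, Polynomial.map_pow, h2, GG_succ, Polynomial.map_ofNat]
    · show (((ghPair ℚ i).1 - (ghPair ℚ i).2) ^ 2).map _ = HH (i + 1)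
      rw [Polynomial.map_pow, Polynomial.map_sub, h1, h2, HH_succ]
      simp only [DD]

/-- For `n ≥ 3` and `2 ≤ k ≤ n`, the resultant `Res(g_k, h_n)` is,
up to sign, a power of `2`. -/
theorem stmt18 : ∀ n k : ℕ, 3 ≤ n → 2 ≤ k → k ≤ n →
    ∃ m : ℕ, resQ (gPol ℚ k) (hPol ℚ n) = 2 ^ m ∨ resQ (gPol ℚ k) (hPol ℚ n) = -(2 ^ m) := by
  intro n k hn hk hkn
  obtain ⟨a, rfl⟩ := Nat.exists_eq_add_of_le hk
  obtain ⟨t, ht⟩ := Nat.exists_eq_add_of_le hkn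
  have hmap1 : (gPol ℚ (2 + a)).map (algebraMap ℚ ℂ) = GG (a + 1) := by
    rw [gPol, show 2 + a - 1 = a + 1 by omega]
    exact (map_ghPair (a + 1)).1
  have hmap2 : (hPol ℚ n).map (algebraMap ℚ ℂ) = HH (a + (t + 1)) := by
    rw [hPol, show n - 1 = a + (t + 1) by omega]
    exact (map_ghPair (a + (t + 1))).2
  have hres : resQ (gPol ℚ (2 + a)) (hPol ℚ n) =
      (GG (a + 1)).leadingCoeff ^ (hPol ℚ n).natDegree * Pr (GG (a + 1)) (HH (a + (t + 1))) := by
    rw [resQ, hmap1, hmap2, Pr]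
  have hlcG : (GG (a + 1)).leadingCoeff = 2 := by
    rw [GG_succ', leadingCoeff_mul, leadingCoeff_C, leadingCoeff_pow,
      (HH_monic a).leadingCoeff]
    norm_num
  have hPrG : Pr (GG (a + 1)) (HH (a + (t + 1))) = Pr (HH a) (HH (a + (t + 1))) ^ 2 := by
    rw [GG_succ', Pr_C_mul_left _ _ (by norm_num : (2:ℂ) ≠ 0), Pr_sq_left]
  have hsp : SP (resQ (gPol ℚ (2 + a)) (hPol ℚ n)) := by
    rw [hres, hlcG, hPrG]
    exact SP_mul (SP_two_pow _) (SP_pow (SP_A a (t + 1) (by omega)) 2)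
  exact hsp
end

section
/- Let α ≠ 0 and define α₁ = 1 + √(2/α), α₂ = 1 − √(2/α), and recursively α_{ℓ1} = 1 + √(2/α_ℓ), α_{ℓ2} = 1 − √(2/α_ℓ) (all in a field containing the relevant square roots). Then: (i) α_{ℓ1}α_{ℓ2} = (α_ℓ − 2)/α_ℓ; (ii) ((α_{ℓ1} − 1)(α_{ℓ'1} − 1))² = 4/(α_ℓ α_{ℓ'}); (iii) ( (α₁₁₁−1)(α₁₂₁−1)/2 · (α₁₁−1)/(α₂₁−1) )² = −1, i.e., i lies in the field generated by the third-level preimages; (iv) 2(α − 2) = ( (α₁−1)⁻¹ · 2(α₁₁−1)⁻¹ · 2(α₂₁−1)⁻¹ )². -/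
/-- Basic identities among the iterated preimages of `α` under
`f(x) = 2/(x-1)²`:  with `α_{ℓ1} = 1 + √(2/α_ℓ)` and `α_{ℓ2} = 1 − √(2/α_ℓ)`,
(i) `α_{ℓ1} α_{ℓ2} = (α_ℓ − 2)/α_ℓ`;
(ii) `((α_{ℓ1} − 1)(α_{ℓ'1} − 1))² = 4/(α_ℓ α_{ℓ'})`;
(iii) `((α₁₁₁−1)(α₁₂₁−1)/2 · (α₁₁−1)/(α₂₁−1))² = −1`, so `i` lies in the field
generated by the third-level preimages;
(iv) `2(α − 2) = ((α₁−1)⁻¹ · 2(α₁₁−1)⁻¹ · 2(α₂₁−1)⁻¹)²`. -/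
theorem stmt19 {K : Type*} [Field K] [CharZero K]
    (α α₁ α₂ α₁₁ α₁₂ α₂₁ α₁₁₁ α₁₂₁ : K) (s s₁ s₂ s₁₁ s₁₂ : K)
    (hα : α ≠ 0) (hα₁ : α₁ ≠ 0) (hα₂ : α₂ ≠ 0) (hα₁₁ : α₁₁ ≠ 0) (hα₁₂ : α₁₂ ≠ 0)
    (hs : s ^ 2 = 2 / α) (h1 : α₁ = 1 + s) (h2 : α₂ = 1 - s)
    (hs₁ : s₁ ^ 2 = 2 / α₁) (h11 : α₁₁ = 1 + s₁) (h12 : α₁₂ = 1 - s₁)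
    (hs₂ : s₂ ^ 2 = 2 / α₂) (h21 : α₂₁ = 1 + s₂)
    (hs₁₁ : s₁₁ ^ 2 = 2 / α₁₁) (h111 : α₁₁₁ = 1 + s₁₁)
    (hs₁₂ : s₁₂ ^ 2 = 2 / α₁₂) (h121 : α₁₂₁ = 1 + s₁₂) :
    (∀ β β₁ β₂ t : K, β ≠ 0 → t ^ 2 = 2 / β → β₁ = 1 + t → β₂ = 1 - t →
        β₁ * β₂ = (β - 2) / β) ∧
    (∀ β β' β₁ β'₁ t t' : K, β ≠ 0 → β' ≠ 0 → t ^ 2 = 2 / β → t' ^ 2 = 2 / β' →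
        β₁ = 1 + t → β'₁ = 1 + t' →
        ((β₁ - 1) * (β'₁ - 1)) ^ 2 = 4 / (β * β')) ∧
    ((α₁₁₁ - 1) * (α₁₂₁ - 1) / 2 * ((α₁₁ - 1) / (α₂₁ - 1))) ^ 2 = -1 ∧
    2 * (α - 2) = ((α₁ - 1)⁻¹ * (2 * (α₁₁ - 1)⁻¹) * (2 * (α₂₁ - 1)⁻¹)) ^ 2 := by
  have sq_ne : ∀ t β : K, β ≠ 0 → t ^ 2 = 2 / β → t ≠ 0 := by
    intro t β hβ ht h0
    have h2 : t ^ 2 ≠ 0 := ht ▸ div_ne_zero two_ne_zero hβ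
    exact h2 (by rw [h0]; ring)
  have hsne := sq_ne s α hα hs
  have hs₁ne := sq_ne s₁ α₁ hα₁ hs₁
  have hs₂ne := sq_ne s₂ α₂ hα₂ hs₂
  have hs₁₁ne := sq_ne s₁₁ α₁₁ hα₁₁ hs₁₁
  have hs₁₂ne := sq_ne s₁₂ α₁₂ hα₁₂ hs₁₂
  refine ⟨?_, ?_, ?_, ?_⟩
  · intro β β₁ β₂ t hβ ht h1 h2
    subst h1 h2
    rw [eq_div_iff hβ] at ht
    field_simp
    linear_combination -ht
  · intro β β' β₁ β'₁ t t' hβ hβ' ht ht' h1 h1'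
    subst h1 h1'
    rw [eq_div_iff hβ] at ht
    rw [eq_div_iff hβ'] at ht'
    field_simp
    linear_combination (t'^2 * β') * ht + 2 * ht'
  · have e : ((α₁₁₁ - 1) * (α₁₂₁ - 1) / 2 * ((α₁₁ - 1) / (α₂₁ - 1))) ^ 2
        = s₁₁ ^ 2 * s₁₂ ^ 2 * s₁ ^ 2 / (4 * s₂ ^ 2) := by
      rw [h111, h121, h11, h21]
      simp only [add_sub_cancel_left]
      field_simp
      ring
    rw [e, hs₁₁, hs₁₂, hs₂, h11, h12, h2]
    rw [eq_div_iff hα₁, h1] at hs₁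
    have h1s : (1 : K) - s₁ ≠ 0 := by rw [h12] at hα₁₂; exact hα₁₂
    have h1s' : (1 : K) + s₁ ≠ 0 := by rw [h11] at hα₁₁; exact hα₁₁
    have h2s : (1 : K) - s ≠ 0 := by rw [h2] at hα₂; exact hα₂
    field_simp
    linear_combination (-2 : K) * hs₁
  · have e : ((α₁ - 1)⁻¹ * (2 * (α₁₁ - 1)⁻¹) * (2 * (α₂₁ - 1)⁻¹)) ^ 2
        = 16 / (s ^ 2 * s₁ ^ 2 * s₂ ^ 2) := by
      rw [h1, h11, h21]
      simp only [add_sub_cancel_left]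
      field_simp
      ring
    rw [e, hs, hs₁, hs₂, h1, h2]
    rw [eq_div_iff hα] at hs
    have h1s' : (1 : K) + s ≠ 0 := by rw [h1] at hα₁; exact hα₁
    have h2s : (1 : K) - s ≠ 0 := by rw [h2] at hα₂; exact hα₂
    field_simp
    linear_combination 16 * hs
end
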